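/- Define ρ : [0,1] → ℝ by ρ(x) = 4(sin²(2πx) + sin²(3πx)), and φ_1(x) = √2 sin(2πx), φ_2(x) = √2 sin(3πx). Then: (i) φ_1 and φ_2 are L²(0,1)-orthonormal, i.e. ∫_0^1 φ_1 φ_2 = 0 and ∫_0^1 φ_1² = ∫_0^1 φ_2² = 1; (ii) φ_1² + φ_2² = ρ/2 on [0,1] and ρ > 0 on (0,1); (iii) the function θ : (0,1) → (−π, π] defined by θ(x) = atan2(φ_1(x), φ_2(x)) (the unique angle in (−π, π] with sinθ = φ_1/√(ρ/2) and cosθ = φ_2/√(ρ/2)) has a jump discontinuity at x = 1/2: the left limit of θ at 1/2 is π and the right limit is −π. -/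

import Mathlib

open MeasureTheory Real Filter Topology Set

noncomputable section

/-- `ρ(x) = 4(sin²(2πx) + sin²(3πx))`. -/
def rhoEx (x : ℝ) : ℝ := 4 * ((Real.sin (2*π*x))^2 + (Real.sin (3*π*x))^2)

/-- `φ₁(x) = √2 sin(2πx)`. -/
def phi1 (x : ℝ) : ℝ := Real.sqrt 2 * Real.sin (2*π*x)

/-- `φ₂(x) = √2 sin(3πx)`. -/
def phi2 (x : ℝ) : ℝ := Real.sqrt 2 * Real.sin (3*π*x)

/-- `θ(x) = atan2(φ₁(x), φ₂(x))`, realized as the complex argument of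
`φ₂(x) + φ₁(x)·i`, the unique angle in `(−π, π]` of the point `(φ₂(x), φ₁(x))`. -/
def thetaEx (x : ℝ) : ℝ := Complex.arg ((phi2 x : ℂ) + (phi1 x : ℂ) * Complex.I)

lemma intCosAux (c : ℝ) (hc : c ≠ 0) :
    (∫ x in (0:ℝ)..1, Real.cos (c*x)) = Real.sin c / c := by
  rw [intervalIntegral.integral_comp_mul_left (fun u => Real.cos u) hc]
  simp [integral_cos, div_eq_inv_mul]

lemma sinNatPi (k : ℕ) : Real.sin (k * π) = 0 := Real.sin_nat_mul_pi k

lemma phiSqSum (x : ℝ) : (phi1 x)^2 + (phi2 x)^2 = rhoEx x / 2 := by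
  unfold phi1 phi2 rhoEx
  have h2 : Real.sqrt 2 ^ 2 = 2 := Real.sq_sqrt (by norm_num)
  ring_nf
  nlinarith [h2]

lemma rhoPos {x : ℝ} (hx : x ∈ Ioo (0:ℝ) 1) : 0 < rhoEx x := by
  obtain ⟨hx0, hx1⟩ := hx
  have hpi := Real.pi_pos
  unfold rhoEx
  have hs : Real.sin (π*x) =
      Real.sin (3*π*x) * Real.cos (2*π*x) - Real.cos (3*π*x) * Real.sin (2*π*x) := by
    have := Real.sin_sub (3*π*x) (2*π*x)
    have e : 3*π*x - 2*π*x = π*x := by ring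
    rw [e] at this
    linarith
  have hp : 0 < Real.sin (π*x) :=
    Real.sin_pos_of_pos_of_lt_pi (by nlinarith) (by nlinarith)
  have hc2 : Real.cos (2*π*x)^2 ≤ 1 := Real.cos_sq_le_one _
  have hc3 : Real.cos (3*π*x)^2 ≤ 1 := Real.cos_sq_le_one _
  nlinarith [sq_nonneg (Real.sin (3*π*x) * Real.cos (2*π*x) + Real.cos (3*π*x) * Real.sin (2*π*x)),
    sq_nonneg (Real.sin (3*π*x)), sq_nonneg (Real.sin (2*π*x)),
    sq_nonneg (Real.sin (3*π*x) - Real.sin (2*π*x)),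
    sq_nonneg (Real.sin (3*π*x) + Real.sin (2*π*x)), hp, hs]

/-- `φ₁, φ₂` are `L²(0,1)`-orthonormal, `φ₁² + φ₂² = ρ/2` with
`ρ > 0` on `(0,1)`, the angle field `θ = atan2(φ₁, φ₂) ∈ (−π, π]` satisfies
`sin θ = φ₁/√(ρ/2)` and `cos θ = φ₂/√(ρ/2)` on `(0,1)`, and `θ` has a jump
discontinuity at `x = 1/2`: its left limit there is `π` and its right limit is `−π`. -/
theorem angle_field_jump_discontinuity :
    ((∫ x in (0:ℝ)..1, phi1 x * phi2 x) = 0 ∧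
      (∫ x in (0:ℝ)..1, (phi1 x)^2) = 1 ∧
      (∫ x in (0:ℝ)..1, (phi2 x)^2) = 1) ∧
    (∀ x : ℝ, (phi1 x)^2 + (phi2 x)^2 = rhoEx x / 2) ∧
    (∀ x ∈ Ioo (0:ℝ) 1, 0 < rhoEx x) ∧
    (∀ x ∈ Ioo (0:ℝ) 1,
      Real.sin (thetaEx x) = phi1 x / Real.sqrt (rhoEx x / 2) ∧
      Real.cos (thetaEx x) = phi2 x / Real.sqrt (rhoEx x / 2) ∧
      thetaEx x ∈ Ioc (-π) π) ∧
    Filter.Tendsto thetaEx (nhdsWithin (1/2 : ℝ) (Iio (1/2))) (nhds π) ∧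
    Filter.Tendsto thetaEx (nhdsWithin (1/2 : ℝ) (Ioi (1/2))) (nhds (-π)) := by
  have hpi := Real.pi_pos
  have h2 : Real.sqrt 2 ^ 2 = 2 := Real.sq_sqrt (by norm_num)
  -- integrals
  refine ⟨⟨?_, ?_, ?_⟩, phiSqSum, fun x hx => rhoPos hx, ?_, ?_, ?_⟩
  · have hpt : ∀ x : ℝ, phi1 x * phi2 x = Real.cos (π*x) - Real.cos (5*π*x) := by
      intro x
      unfold phi1 phi2
      rw [Real.cos_sub_cos]
      have e1 : (π*x + 5*π*x)/2 = 3*π*x := by ring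
      have e2 : (π*x - 5*π*x)/2 = -(2*π*x) := by ring
      rw [e1, e2, Real.sin_neg]
      linear_combination (Real.sin (2*π*x) * Real.sin (3*π*x)) * h2
    simp_rw [hpt]
    rw [intervalIntegral.integral_sub ((by fun_prop : Continuous _).intervalIntegrable 0 1) ((by fun_prop : Continuous _).intervalIntegrable 0 1)]
    rw [intCosAux π (by positivity), intCosAux (5*π) (by positivity)]
    have h1 : Real.sin π = 0 := Real.sin_pi
    have h5 : Real.sin (5*π) = 0 := by
      have := sinNatPi 5; norm_num at this; linarith [this]
    rw [h1, h5]; simp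
  · have hpt : ∀ x : ℝ, (phi1 x)^2 = 1 - Real.cos (4*π*x) := by
      intro x
      unfold phi1
      rw [mul_pow, h2]
      have := Real.sin_sq_eq_half_sub (2*π*x)
      have e : 2*(2*π*x) = 4*π*x := by ring
      rw [e] at this
      linarith
    simp_rw [hpt]
    rw [intervalIntegral.integral_sub ((by fun_prop : Continuous _).intervalIntegrable 0 1) ((by fun_prop : Continuous _).intervalIntegrable 0 1)]
    rw [intCosAux (4*π) (by positivity)]
    have h4 : Real.sin (4*π) = 0 := by
      have := sinNatPi 4; norm_num at this; linarith [this]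
    rw [h4]; simp
  · have hpt : ∀ x : ℝ, (phi2 x)^2 = 1 - Real.cos (6*π*x) := by
      intro x
      unfold phi2
      rw [mul_pow, h2]
      have := Real.sin_sq_eq_half_sub (3*π*x)
      have e : 2*(3*π*x) = 6*π*x := by ring
      rw [e] at this
      linarith
    simp_rw [hpt]
    rw [intervalIntegral.integral_sub ((by fun_prop : Continuous _).intervalIntegrable 0 1) ((by fun_prop : Continuous _).intervalIntegrable 0 1)]
    rw [intCosAux (6*π) (by positivity)]
    have h6 : Real.sin (6*π) = 0 := by
      have := sinNatPi 6; norm_num at this; linarith [this]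
    rw [h6]; simp
  · -- sin/cos of theta
    intro x hx
    have hρ : 0 < rhoEx x := rhoPos hx
    set z : ℂ := (phi2 x : ℂ) + (phi1 x : ℂ) * Complex.I with hz
    have hre : z.re = phi2 x := by simp [hz]
    have him : z.im = phi1 x := by simp [hz]
    have habs : ‖z‖ = Real.sqrt (rhoEx x / 2) := by
      rw [Complex.norm_def, Complex.normSq_apply, hre, him]
      congr 1
      rw [← phiSqSum x]; ring
    have habsne : ‖z‖ ≠ 0 := by
      rw [habs]
      exact ne_of_gt (Real.sqrt_pos.mpr (by linarith))
    have hzne : z ≠ 0 := fun h0 => habsne (by rw [h0]; simp)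
    refine ⟨?_, ?_, Complex.arg_mem_Ioc z⟩
    · rw [thetaEx, ← hz, Complex.sin_arg, him, habs]
    · rw [thetaEx, ← hz, Complex.cos_arg hzne, hre, habs]
  · -- left limit
    have hf : Continuous fun x : ℝ => (phi2 x : ℂ) + (phi1 x : ℂ) * Complex.I := by
      unfold phi1 phi2; fun_prop
    have hval : ((phi2 (1/2) : ℂ) + (phi1 (1/2) : ℂ) * Complex.I) =
        ((-Real.sqrt 2 : ℝ) : ℂ) := by
      have h1 : phi1 (1/2) = 0 := by
        unfold phi1
        have : 2*π*(1/2:ℝ) = π := by ring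
        rw [this, Real.sin_pi, mul_zero]
      have h2' : phi2 (1/2) = -Real.sqrt 2 := by
        unfold phi2
        have : 3*π*(1/2:ℝ) = π + π/2 := by ring
        rw [this, Real.sin_add]
        norm_num
      rw [h1, h2']; push_cast; ring
    have hre' : (((-Real.sqrt 2 : ℝ) : ℂ)).re < 0 := by
      simp
    have him' : (((-Real.sqrt 2 : ℝ) : ℂ)).im = 0 := by simp
    have harg := Complex.tendsto_arg_nhdsWithin_im_nonneg_of_re_neg_of_im_zero hre' him'
    apply harg.comp
    rw [tendsto_nhdsWithin_iff]
    constructor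
    · rw [← hval]
      exact (hf.tendsto _).mono_left nhdsWithin_le_nhds
    · have hmem : Ioo (0:ℝ) (1/2) ∈ 𝓝[Iio (1/2:ℝ)] (1/2) := by
        rw [show Ioo (0:ℝ) (1/2) = Ioi 0 ∩ Iio (1/2) from rfl]
        exact inter_mem (mem_nhdsWithin_of_mem_nhds (Ioi_mem_nhds (by norm_num)))
          self_mem_nhdsWithin
      filter_upwards [hmem] with x hx
      have hsin : 0 < Real.sin (2*π*x) :=
        Real.sin_pos_of_pos_of_lt_pi (by nlinarith [hx.1]) (by nlinarith [hx.2])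
      have : 0 ≤ phi1 x := by
        unfold phi1; positivity
      simp only [mem_setOf_eq, Complex.add_im, Complex.ofReal_im, Complex.mul_im,
        Complex.ofReal_re, Complex.I_im, Complex.I_re, mul_zero, mul_one, zero_add]
      linarith
  · -- right limit
    have hf : Continuous fun x : ℝ => (phi2 x : ℂ) + (phi1 x : ℂ) * Complex.I := by
      unfold phi1 phi2; fun_prop
    have hval : ((phi2 (1/2) : ℂ) + (phi1 (1/2) : ℂ) * Complex.I) =
        ((-Real.sqrt 2 : ℝ) : ℂ) := by
      have h1 : phi1 (1/2) = 0 := by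
        unfold phi1
        have : 2*π*(1/2:ℝ) = π := by ring
        rw [this, Real.sin_pi, mul_zero]
      have h2' : phi2 (1/2) = -Real.sqrt 2 := by
        unfold phi2
        have : 3*π*(1/2:ℝ) = π + π/2 := by ring
        rw [this, Real.sin_add]
        norm_num
      rw [h1, h2']; push_cast; ring
    have hre' : (((-Real.sqrt 2 : ℝ) : ℂ)).re < 0 := by
      simp
    have him' : (((-Real.sqrt 2 : ℝ) : ℂ)).im = 0 := by simp
    have harg := Complex.tendsto_arg_nhdsWithin_im_neg_of_re_neg_of_im_zero hre' him'
    apply harg.comp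
    rw [tendsto_nhdsWithin_iff]
    constructor
    · rw [← hval]
      exact (hf.tendsto _).mono_left nhdsWithin_le_nhds
    · have hmem : Ioo (1/2:ℝ) 1 ∈ 𝓝[Ioi (1/2:ℝ)] (1/2) := by
        rw [show Ioo (1/2:ℝ) 1 = Ioi (1/2) ∩ Iio 1 from rfl]
        exact inter_mem self_mem_nhdsWithin
          (mem_nhdsWithin_of_mem_nhds (Iio_mem_nhds (by norm_num)))
      filter_upwards [hmem] with x hx
      have hsin : Real.sin (2*π*x) < 0 := by
        have := Real.sin_sub_two_pi (2*π*x)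
        rw [← this]
        apply Real.sin_neg_of_neg_of_neg_pi_lt
        · nlinarith [hx.2]
        · nlinarith [hx.1]
      have hphi : phi1 x < 0 := by
        unfold phi1
        have : 0 < Real.sqrt 2 := Real.sqrt_pos.mpr (by norm_num)
        nlinarith
      simp only [mem_setOf_eq, Complex.add_im, Complex.ofReal_im, Complex.mul_im,
        Complex.ofReal_re, Complex.I_im, Complex.I_re, mul_zero, mul_one, zero_add]
      linarith
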